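/- Let s ∈ (0,1), N ≥ 1, and G_R^+(x,y) = (k/2)·|x-y|^{2s-N}·∫_0^{ψ_R(x,y)} z^{s-1}/(z+1)^{N/2} dz with ψ_R(x,y) = (2x₁ - |x|²/R)(2y₁ - |y|²/R)/|x-y|², for any constant k > 0. If x, y are distinct points of the ball B_{R₀}^+ = {z : |z - (R₀,0,...,0)| < R₀}, then R ↦ G_R^+(x,y) is nondecreasing on [R₀, ∞) and converges, as R → ∞, to G_∞^+(x,y) = (k/2)·|x-y|^{2s-N}·∫_0^{4x₁y₁/|x-y|²} z^{s-1}/(z+1)^{N/2} dz. -/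

import Mathlib

open Real Filter

/-- `ψ_R(x,y) = (2x₁ - |x|²/R)(2y₁ - |y|²/R)/|x-y|²`. -/
noncomputable def psiR {N : ℕ} (hN : 0 < N) (R : ℝ) (x y : EuclideanSpace ℝ (Fin N)) : ℝ :=
  (2 * x ⟨0, hN⟩ - ‖x‖ ^ 2 / R) * (2 * y ⟨0, hN⟩ - ‖y‖ ^ 2 / R) / ‖x - y‖ ^ 2

/-- Green function of the ball `B_R^+` (up to the normalizing constant `k`). -/
noncomputable def GreenR {N : ℕ} (hN : 0 < N) (s k R : ℝ) (x y : EuclideanSpace ℝ (Fin N)) : ℝ :=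
  (k / 2) * ‖x - y‖ ^ (2 * s - (N : ℝ)) *
    ∫ z in (0:ℝ)..(psiR hN R x y), z ^ (s - 1) / (z + 1) ^ ((N : ℝ) / 2)

/-- Half-space Green function (up to the normalizing constant `k`). -/
noncomputable def GreenInf {N : ℕ} (hN : 0 < N) (s k : ℝ) (x y : EuclideanSpace ℝ (Fin N)) : ℝ :=
  (k / 2) * ‖x - y‖ ^ (2 * s - (N : ℝ)) *
    ∫ z in (0:ℝ)..(4 * x ⟨0, hN⟩ * y ⟨0, hN⟩ / ‖x - y‖ ^ 2),
      z ^ (s - 1) / (z + 1) ^ ((N : ℝ) / 2)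

section aux

variable {N : ℕ} {s : ℝ}

lemma myIntInt (hs : 0 < s) (N : ℕ) (a b : ℝ) (ha : 0 ≤ a) (hb : 0 ≤ b) :
    IntervalIntegrable (fun z : ℝ => z ^ (s - 1) / (z + 1) ^ ((N : ℝ) / 2))
      MeasureTheory.volume a b := by
  have h1 : IntervalIntegrable (fun z : ℝ => z ^ (s - 1)) MeasureTheory.volume a b :=
    intervalIntegral.intervalIntegrable_rpow' (by linarith)
  have h2 : ContinuousOn (fun z : ℝ => ((z + 1) ^ ((N : ℝ) / 2))⁻¹) (Set.uIcc a b) := by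
    apply ContinuousOn.inv₀
    · exact (continuousOn_id.add continuousOn_const).rpow_const fun z hz => Or.inr (by positivity)
    · intro z hz
      have hz0 : 0 ≤ z := by
        rcases Set.mem_uIcc.mp hz with h | h
        · exact le_trans ha h.1
        · exact le_trans hb h.1
      positivity
  simpa [div_eq_mul_inv] using h1.mul_continuousOn h2

lemma myNonneg (z : ℝ) (hz : 0 ≤ z) : 0 ≤ z ^ (s - 1) / (z + 1) ^ ((N : ℝ) / 2) := by
  positivity

lemma myMono (hs : 0 < s) (N : ℕ) {a b : ℝ} (ha : 0 ≤ a) (hab : a ≤ b) :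
    (∫ z in (0:ℝ)..a, z ^ (s - 1) / (z + 1) ^ ((N : ℝ) / 2)) ≤
      ∫ z in (0:ℝ)..b, z ^ (s - 1) / (z + 1) ^ ((N : ℝ) / 2) := by
  have hb : 0 ≤ b := le_trans ha hab
  have h1 := myIntInt hs N 0 a le_rfl ha
  have h2 := myIntInt hs N a b ha hb
  rw [← intervalIntegral.integral_add_adjacent_intervals h1 h2]
  have : 0 ≤ ∫ z in a..b, z ^ (s - 1) / (z + 1) ^ ((N : ℝ) / 2) :=
    intervalIntegral.integral_nonneg hab fun u hu => myNonneg u (le_trans ha hu.1)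
  linarith

end aux

theorem GreenR_mono_tendsto_GreenInf (N : ℕ) (hN : 0 < N) (s : ℝ) (hs : s ∈ Set.Ioo (0:ℝ) 1)
    (k : ℝ) (hk : 0 < k) (R₀ : ℝ) (hR₀ : 0 < R₀)
    (x y : EuclideanSpace ℝ (Fin N)) (hxy : x ≠ y)
    (hx : ‖x - (show EuclideanSpace ℝ (Fin N) from WithLp.toLp 2 (fun i => if i = (⟨0, hN⟩ : Fin N) then R₀ else 0))‖ < R₀)
    (hy : ‖y - (show EuclideanSpace ℝ (Fin N) from WithLp.toLp 2 (fun i => if i = (⟨0, hN⟩ : Fin N) then R₀ else 0))‖ < R₀) :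
    MonotoneOn (fun R => GreenR hN s k R x y) (Set.Ici R₀) ∧
    Tendsto (fun R => GreenR hN s k R x y) atTop (nhds (GreenInf hN s k x y)) := by
  set c : EuclideanSpace ℝ (Fin N) := WithLp.toLp 2 (fun i => if i = (⟨0, hN⟩ : Fin N) then R₀ else 0) with hc
  -- ball condition
  have key : ∀ z : EuclideanSpace ℝ (Fin N), ‖z - c‖ < R₀ → ‖z‖ ^ 2 < 2 * R₀ * z ⟨0, hN⟩ := by
    intro z hz
    have h1 : ‖z - c‖ ^ 2 = ‖z‖ ^ 2 - 2 * inner ℝ z c + ‖c‖ ^ 2 := norm_sub_sq_real z c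
    have h2 : (inner ℝ z c : ℝ) = z ⟨0, hN⟩ * R₀ := by
      simp [hc, PiLp.inner_apply, RCLike.inner_apply, mul_ite, Finset.sum_ite_eq']
      ring
    have h3 : ‖c‖ ^ 2 = R₀ ^ 2 := by
      rw [← real_inner_self_eq_norm_sq, hc, PiLp.inner_apply]
      simp [hc, PiLp.inner_apply, RCLike.inner_apply, mul_ite, Finset.sum_ite_eq', sq]
    have h4 : ‖z - c‖ ^ 2 < R₀ ^ 2 := by
      apply pow_lt_pow_left₀ hz (norm_nonneg _)
      norm_num
    nlinarith
  have hx' : ‖x‖ ^ 2 < 2 * R₀ * x ⟨0, hN⟩ := key x hx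
  have hy' : ‖y‖ ^ 2 < 2 * R₀ * y ⟨0, hN⟩ := key y hy
  set a := x ⟨0, hN⟩
  set b := y ⟨0, hN⟩
  have ha : 0 < a := by nlinarith [sq_nonneg ‖x‖]
  have hb : 0 < b := by nlinarith [sq_nonneg ‖y‖]
  have hd : 0 < ‖x - y‖ ^ 2 :=
    pow_pos (norm_pos_iff.mpr (sub_ne_zero.mpr hxy)) 2
  -- positivity of factors
  have hfx : ∀ R, R₀ ≤ R → 0 ≤ 2 * a - ‖x‖ ^ 2 / R := by
    intro R hR
    have : ‖x‖ ^ 2 / R ≤ ‖x‖ ^ 2 / R₀ := div_le_div_of_nonneg_left (sq_nonneg _) hR₀ hR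
    have h2 : ‖x‖ ^ 2 / R₀ < 2 * a := by rw [div_lt_iff₀ hR₀]; nlinarith
    linarith
  have hfy : ∀ R, R₀ ≤ R → 0 ≤ 2 * b - ‖y‖ ^ 2 / R := by
    intro R hR
    have : ‖y‖ ^ 2 / R ≤ ‖y‖ ^ 2 / R₀ := div_le_div_of_nonneg_left (sq_nonneg _) hR₀ hR
    have h2 : ‖y‖ ^ 2 / R₀ < 2 * b := by rw [div_lt_iff₀ hR₀]; nlinarith
    linarith
  have hpsi_nonneg : ∀ R, R₀ ≤ R → 0 ≤ psiR hN R x y := by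
    intro R hR
    exact div_nonneg (mul_nonneg (hfx R hR) (hfy R hR)) hd.le
  have hpsi_mono : ∀ R₁ R₂, R₀ ≤ R₁ → R₁ ≤ R₂ → psiR hN R₁ x y ≤ psiR hN R₂ x y := by
    intro R₁ R₂ h1 h2
    have hR1 : 0 < R₁ := lt_of_lt_of_le hR₀ h1
    have e1 : ‖x‖ ^ 2 / R₂ ≤ ‖x‖ ^ 2 / R₁ := div_le_div_of_nonneg_left (sq_nonneg _) hR1 h2
    have e2 : ‖y‖ ^ 2 / R₂ ≤ ‖y‖ ^ 2 / R₁ := div_le_div_of_nonneg_left (sq_nonneg _) hR1 h2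
    unfold psiR
    apply (div_le_div_iff_of_pos_right hd).mpr
    exact mul_le_mul (by linarith) (by linarith) (hfy R₁ h1) (by
      have := hfx R₁ h1; linarith)
  have hpsi_le : ∀ R, R₀ ≤ R → psiR hN R x y ≤ 4 * a * b / ‖x - y‖ ^ 2 := by
    intro R hR
    have hR' : 0 < R := lt_of_lt_of_le hR₀ hR
    unfold psiR
    apply (div_le_div_iff_of_pos_right hd).mpr
    have e1 : ‖x‖ ^ 2 / R ≥ 0 := by positivity
    have e2 : ‖y‖ ^ 2 / R ≥ 0 := by positivity
    nlinarith [hfx R hR, hfy R hR]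
  have hpsi_tendsto : Tendsto (fun R => psiR hN R x y) atTop
      (nhds (4 * a * b / ‖x - y‖ ^ 2)) := by
    have t1 : Tendsto (fun R : ℝ => ‖x‖ ^ 2 / R) atTop (nhds 0) :=
      Tendsto.div_atTop tendsto_const_nhds tendsto_id
    have t2 : Tendsto (fun R : ℝ => ‖y‖ ^ 2 / R) atTop (nhds 0) :=
      Tendsto.div_atTop tendsto_const_nhds tendsto_id
    have := (((tendsto_const_nhds (x := (2*a : ℝ))).sub t1).mul
      ((tendsto_const_nhds (x := (2*b : ℝ))).sub t2)).div_const (‖x - y‖ ^ 2)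
    convert this using 2
    · rfl
    ring
  set T : ℝ := 4 * a * b / ‖x - y‖ ^ 2 with hT
  have hT0 : 0 ≤ T := by positivity
  set F : ℝ → ℝ := fun t => ∫ z in (0:ℝ)..t, z ^ (s - 1) / (z + 1) ^ ((N : ℝ) / 2) with hF
  -- continuity of the primitive on [0, T]
  have hFc : ContinuousOn F (Set.uIcc 0 T) :=
    intervalIntegral.continuousOn_primitive_interval' (myIntInt hs.1 N 0 T le_rfl hT0)
      Set.left_mem_uIcc
  have hFT : Tendsto (fun R => F (psiR hN R x y)) atTop (nhds (F T)) := by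
    refine (hFc T Set.right_mem_uIcc).tendsto.comp ?_
    rw [tendsto_nhdsWithin_iff]
    refine ⟨hpsi_tendsto, ?_⟩
    filter_upwards [eventually_ge_atTop R₀] with R hR
    exact Set.mem_uIcc.mpr (Or.inl ⟨hpsi_nonneg R hR, hpsi_le R hR⟩)
  have hC : 0 < k / 2 * ‖x - y‖ ^ (2 * s - (N : ℝ)) :=
    mul_pos (by linarith) (Real.rpow_pos_of_pos (norm_pos_iff.mpr (sub_ne_zero.mpr hxy)) _)
  constructor
  · intro R₁ h1 R₂ h2 h12
    simp only [GreenR]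
    exact mul_le_mul_of_nonneg_left
      (myMono hs.1 N (hpsi_nonneg R₁ h1) (hpsi_mono R₁ R₂ h1 h12)) hC.le
  · simp only [GreenR, GreenInf]
    exact hFT.const_mul _
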